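/- Let p be an odd prime, e ≥ 1, g ∈ Z[X], and let x1 be a unit modulo p with x1^(g(x0)) ≡ x1 (mod p) for a given x0 and g(x1) ≢ 1 (mod p). Then for each e there is exactly one residue x modulo p^e with x ≡ x1 (mod p) such that the interpolated function ω(x)^(g(x0))·⟨x⟩^(g(x)) ≡ x (mod p^e); i.e., nonsingular solutions lift uniquely by Hensel's lemma. -/

import Mathlib

private lemma aux_geom (p k : ℕ) (b : ℤ)
    (h1 : (p:ℤ) ∣ b - 1) (hb : (p:ℤ)^k ∣ b - 1) : (p:ℤ)^(k+1) ∣ b^p - 1 := by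
  have hgeom : (∑ i ∈ Finset.range p, b ^ i) * (b - 1) = b ^ p - 1 := geom_sum_mul b p
  rw [← hgeom, pow_succ, mul_comm ((p:ℤ)^k) _]
  refine mul_dvd_mul ?_ hb
  have hsum : (p:ℤ) ∣ (∑ i ∈ Finset.range p, b ^ i) - (∑ _i ∈ Finset.range p, (1:ℤ)) := by
    rw [← Finset.sum_sub_distrib]
    refine Finset.dvd_sum fun i _ => h1.trans ?_
    simpa using sub_dvd_pow_sub_pow b 1 i
  have hone : (∑ _i ∈ Finset.range p, (1:ℤ)) = p := by simp
  rw [hone] at hsum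
  simpa using dvd_add hsum (dvd_refl (p:ℤ))

private lemma aux_lift (p : ℕ) (b : ℤ) (h1 : (p:ℤ) ∣ b - 1) :
    ∀ e : ℕ, (p:ℤ)^(e+1) ∣ b^(p^e) - 1 := by
  intro e
  induction e with
  | zero => simpa using h1
  | succ n ih =>
      have h1' : (p:ℤ) ∣ b^(p^n) - 1 := (dvd_pow_self (p:ℤ) (Nat.succ_ne_zero n)).trans ih
      have h2 := aux_geom p (n+1) (b^(p^n)) h1' ih
      rwa [← pow_mul, ← pow_succ] at h2

private lemma aux_ker (p : ℕ) [Fact p.Prime] (e : ℕ) (he : 1 ≤ e)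
    (w : (ZMod (p^e))ˣ)
    (hw : ZMod.castHom (dvd_pow_self p (Nat.one_le_iff_ne_zero.mp he)) (ZMod p) (w : ZMod (p^e)) = 1) :
    w ^ (p^(e-1)) = 1 := by
  have hp : p.Prime := Fact.out
  haveI : NeZero (p^e) := ⟨pow_ne_zero _ hp.ne_zero⟩
  set b : ℤ := ((w : ZMod (p^e)).val : ℤ) with hbdef
  have hb : ((b : ℤ) : ZMod (p^e)) = (w : ZMod (p^e)) := by
    simp [hbdef, ZMod.natCast_val, ZMod.cast_id]
  have h1 : (p:ℤ) ∣ b - 1 := by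
    rw [← ZMod.intCast_zmod_eq_zero_iff_dvd]
    push_cast
    have h : ((b : ℤ) : ZMod p)
        = ZMod.castHom (dvd_pow_self p (Nat.one_le_iff_ne_zero.mp he)) (ZMod p) ((b:ℤ) : ZMod (p^e)) :=
      (map_intCast _ b).symm
    rw [h, hb, hw]
    ring
  have h2 := aux_lift p b h1 (e-1)
  rw [show e - 1 + 1 = e by omega] at h2
  have h3 : ((b^(p^(e-1)) - 1 : ℤ) : ZMod (p^e)) = 0 := by
    rw [ZMod.intCast_zmod_eq_zero_iff_dvd]
    exact_mod_cast h2
  have h4 : ((w : ZMod (p^e)))^(p^(e-1)) = 1 := by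
    push_cast at h3
    rw [hb] at h3
    linear_combination h3
  exact Units.ext (by simpa using h4)

theorem stmt_4 (p : ℕ) [Fact p.Prime] (hp2 : p ≠ 2) (e : ℕ) (he : 1 ≤ e)
    (g : Polynomial ℤ) (x0 : ℤ) (x1 : ZMod p) (hx1 : x1 ≠ 0)
    (hfix : x1 ^ (g.eval x0) = x1)
    (hnonsing : (g.map (Int.castRingHom (ZMod p))).eval x1 ≠ 1) :
    ∃! x : ZMod (p ^ e),
      ZMod.castHom (dvd_pow_self p (by omega : e ≠ 0)) (ZMod p) x = x1 ∧
      ∀ X : ℤ, (X : ZMod (p ^ e)) = x → (X : ZMod (p - 1)) = (x0 : ZMod (p - 1)) →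
        ∀ hX : IsUnit ((X : ZMod (p ^ e))), hX.unit ^ (g.eval X) = hX.unit := by
  have hp : p.Prime := Fact.out
  have hp3 : 3 ≤ p := by have := hp.two_le; omega
  haveI : NeZero (p^e) := ⟨pow_ne_zero _ hp.ne_zero⟩
  haveI : NeZero (p - 1) := ⟨by omega⟩
  set π := ZMod.castHom (dvd_pow_self p (by omega : e ≠ 0)) (ZMod p) with hπ
  set φ := Units.map π.toMonoidHom with hφ
  have hcop : Nat.Coprime p (p - 1) := by
    have h : Nat.Coprime (1 + (p - 1)) (p - 1) :=
      Nat.coprime_add_self_left.mpr (Nat.coprime_one_left _)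
    rwa [show 1 + (p - 1) = p by omega] at h
  have hcard : Fintype.card (ZMod (p^e))ˣ = p^(e-1) * (p-1) := by
    rw [ZMod.card_units_eq_totient, Nat.totient_prime_pow hp (by omega)]
  have keyA : ∀ w : (ZMod (p^e))ˣ, φ w = 1 → w ^ (p-1) = 1 → w = 1 := by
    intro w hw1 hw2
    have hker : π ((w : ZMod (p^e))) = 1 := by
      have h := congrArg (Units.val) hw1
      simpa [hφ, Units.coe_map] using h
    have h1 := aux_ker p e he w hker
    have d1 : orderOf w ∣ p^(e-1) := orderOf_dvd_of_pow_eq_one h1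
    have d2 : orderOf w ∣ p - 1 := orderOf_dvd_of_pow_eq_one hw2
    have hdg : orderOf w ∣ Nat.gcd (p^(e-1)) (p-1) := Nat.dvd_gcd d1 d2
    have hg : Nat.gcd (p^(e-1)) (p-1) = 1 := hcop.pow_left (e-1)
    rw [hg, Nat.dvd_one] at hdg
    exact orderOf_eq_one_iff.mp hdg
  have keyC : ∀ (u : (ZMod (p^e))ˣ) (m : ℤ), ¬ (p:ℤ) ∣ m → u ^ m = 1 → u ^ (p-1) = 1 := by
    intro u m hpm hum
    have d1 : (orderOf u : ℤ) ∣ m := orderOf_dvd_iff_zpow_eq_one.mpr hum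
    have d2 : orderOf u ∣ p^(e-1) * (p-1) := hcard ▸ orderOf_dvd_card
    have hpord : ¬ p ∣ orderOf u := by
      intro hd
      exact hpm (dvd_trans (Int.natCast_dvd_natCast.mpr hd) d1)
    have hco : (orderOf u).Coprime (p^(e-1)) :=
      ((hp.coprime_iff_not_dvd.mpr hpord).symm).pow_right (e-1)
    exact orderOf_dvd_iff_pow_eq_one.mp (hco.dvd_of_dvd_mul_left d2)
  -- existence object : Teichmüller lift of x1
  have hn1p : ((x1.val : ℕ) : ZMod p) = x1 := by
    simp [ZMod.natCast_val, ZMod.cast_id]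
  have hpn1 : ¬ p ∣ x1.val := by
    intro hd
    exact hx1 (hn1p ▸ (ZMod.natCast_eq_zero_iff x1.val p).mpr hd)
  have hu0 : IsUnit ((x1.val : ℕ) : ZMod (p^e)) := by
    rw [ZMod.isUnit_iff_coprime]
    exact (Nat.coprime_comm.mp (hp.coprime_iff_not_dvd.mpr hpn1)).pow_right e
  set u0 := hu0.unit with hu0d
  set t := u0 ^ (p^(e-1)) with ht
  have ht1 : t ^ (p-1) = 1 := by
    rw [ht, ← pow_mul, ← hcard]
    exact pow_card_eq_one
  have hφu0 : ((φ u0 : (ZMod p)ˣ) : ZMod p) = x1 := by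
    rw [hφ, Units.coe_map]
    show π (u0 : ZMod (p^e)) = x1
    rw [hu0d, hu0.unit_spec, map_natCast π, hn1p]
  have hpe1 : ∃ c, p^(e-1) = (p-1) * c + 1 := by
    have hd : (p-1) ∣ p^(e-1) - 1 := by
      simpa using Nat.sub_dvd_pow_sub_pow p 1 (e-1)
    obtain ⟨c, hc⟩ := hd
    have hpos : 0 < p^(e-1) := pow_pos hp.pos _
    exact ⟨c, by omega⟩
  have hφt : ((φ t : (ZMod p)ˣ) : ZMod p) = x1 := by
    obtain ⟨c, hc⟩ := hpe1
    rw [ht, map_pow, Units.val_pow_eq_pow_val, hφu0, hc, pow_succ, pow_mul,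
      ZMod.pow_card_sub_one_eq_one hx1, one_pow, one_mul]
  have hπt : π ((t : ZMod (p^e))) = x1 := by
    have h : ((φ t : (ZMod p)ˣ) : ZMod p) = π ((t : ZMod (p^e))) := by
      rw [hφ, Units.coe_map]; rfl
    rw [← h, hφt]
  -- t ^ (g(x0) - 1) = 1
  have hE : t ^ (Polynomial.eval x0 g - 1) = 1 := by
    set w := t ^ (Polynomial.eval x0 g - 1) with hwdef
    have hw2 : w ^ (p-1) = 1 := by
      rw [← zpow_natCast w, hwdef, ← zpow_mul, mul_comm, zpow_mul, zpow_natCast, ht1, one_zpow]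
    have hw1 : φ w = 1 := by
      apply Units.ext
      rw [hwdef, map_zpow φ, Units.val_zpow_eq_zpow_val, hφt, Units.val_one,
        zpow_sub₀ hx1, hfix, zpow_one, div_self hx1]
    exact keyA w hw1 hw2
  -- exponent congruence tool
  have hcong : ∀ (s : (ZMod (p^e))ˣ), s ^ (p-1) = 1 →
      ∀ a b : ℤ, (((p-1:ℕ)):ℤ) ∣ a - b → s ^ a = s ^ b := by
    rintro s hs a b ⟨c, hc⟩
    have hsz : s ^ (((p-1:ℕ)):ℤ) = 1 := by rw [zpow_natCast, hs]
    have hab : a = b + (((p-1:ℕ)):ℤ) * c := by omega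
    rw [hab, zpow_add, zpow_mul, hsz, one_zpow, mul_one]
  have hevalcong : ∀ X : ℤ, (X : ZMod (p-1)) = (x0 : ZMod (p-1)) →
      (((p-1:ℕ)):ℤ) ∣ (g.eval X - g.eval x0) := by
    intro X hX
    have e1 : ∀ Y : ℤ, ((g.eval Y : ℤ) : ZMod (p-1))
        = (g.map (Int.castRingHom (ZMod (p-1)))).eval ((Y : ZMod (p-1))) := by
      intro Y
      rw [Polynomial.eval_map]
      exact (Polynomial.eval₂_at_apply (Int.castRingHom (ZMod (p-1))) Y).symm
    have h1 : ((g.eval X : ℤ) : ZMod (p-1)) = ((g.eval x0 : ℤ) : ZMod (p-1)) := by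
      rw [e1, e1, hX]
    rw [ZMod.intCast_eq_intCast_iff] at h1
    exact Int.ModEq.dvd h1.symm
  have hevalp : ∀ X : ℤ, (X : ZMod p) = x1 →
      ((g.eval X : ℤ) : ZMod p) = (g.map (Int.castRingHom (ZMod p))).eval x1 := by
    intro X hX
    rw [← hX, Polynomial.eval_map]
    exact (Polynomial.eval₂_at_apply (Int.castRingHom (ZMod p)) X).symm
  refine ⟨(t : ZMod (p^e)), ⟨hπt, ?_⟩, ?_⟩
  · intro X hXx hXm hX
    have hXt : hX.unit = t := Units.ext (by rw [hX.unit_spec, hXx])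
    rw [hXt]
    have h1 : t ^ (g.eval X) = t ^ (g.eval x0) :=
      hcong t ht1 _ _ (hevalcong X hXm)
    rw [h1, show g.eval x0 = (g.eval x0 - 1) + 1 by ring, zpow_add, hE, one_mul, zpow_one]
  · rintro y ⟨hy1, hy2⟩
    have hcop2 : (p^e).Coprime (p-1) := hcop.pow_left e
    obtain ⟨k, hk1, hk2⟩ := Nat.chineseRemainder hcop2 y.val ((x0 : ZMod (p-1))).val
    have hXx : ((k : ℤ) : ZMod (p^e)) = y := by
      push_cast
      rw [(ZMod.natCast_eq_natCast_iff _ _ _).mpr hk1]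
      simp [ZMod.natCast_val, ZMod.cast_id]
    have hXm : ((k : ℤ) : ZMod (p-1)) = (x0 : ZMod (p-1)) := by
      push_cast
      rw [(ZMod.natCast_eq_natCast_iff _ _ _).mpr hk2]
      simp [ZMod.natCast_val, ZMod.cast_id]
    have hπy : ((y.val : ℕ) : ZMod p) = x1 := by
      rw [ZMod.natCast_val, ← hy1]
      rfl
    have hpy : ¬ p ∣ y.val := by
      intro hd
      exact hx1 (hπy ▸ (ZMod.natCast_eq_zero_iff y.val p).mpr hd)
    have hXu : IsUnit (((k : ℤ) : ZMod (p^e))) := by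
      rw [hXx]
      have hyu : IsUnit ((y.val : ℕ) : ZMod (p^e)) := by
        rw [ZMod.isUnit_iff_coprime]
        exact (Nat.coprime_comm.mp (hp.coprime_iff_not_dvd.mpr hpy)).pow_right e
      simpa [ZMod.natCast_val, ZMod.cast_id] using hyu
    have hu := hy2 (k : ℤ) hXx hXm hXu
    set u := hXu.unit with hudef
    have huy : (u : ZMod (p^e)) = y := by rw [hudef, hXu.unit_spec, hXx]
    have hum : u ^ (g.eval (k : ℤ) - 1) = 1 := by
      rw [zpow_sub, zpow_one, hu]
      exact div_self' u
    have hpm : ¬ (p:ℤ) ∣ (g.eval (k : ℤ) - 1) := by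
      intro hd
      have h0 : ((g.eval (k:ℤ) - 1 : ℤ) : ZMod p) = 0 :=
        (ZMod.intCast_zmod_eq_zero_iff_dvd _ p).mpr hd
      have hXp : ((k : ℤ) : ZMod p) = x1 := by
        have h : ((k : ℤ) : ZMod p) = π (((k : ℤ)) : ZMod (p^e)) := (map_intCast π _).symm
        rw [h, hXx, hy1]
      rw [Int.cast_sub, Int.cast_one, hevalp _ hXp, sub_eq_zero] at h0
      exact hnonsing h0
    have hup : u ^ (p-1) = 1 := keyC u _ hpm hum
    have hφut : φ u = φ t := by
      apply Units.ext
      have h1 : ((φ u : (ZMod p)ˣ) : ZMod p) = π ((u : ZMod (p^e))) := by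
        rw [hφ, Units.coe_map]; rfl
      rw [h1, huy, hy1, hφt]
    have hw : u * t⁻¹ = 1 := by
      apply keyA
      · rw [map_mul, map_inv, hφut, mul_inv_cancel]
      · rw [mul_pow, hup, one_mul, inv_pow, ht1, inv_one]
    have hut : u = t := mul_inv_eq_one.mp hw
    rw [← huy, hut]
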